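/- Let A, B ⊂ 𝕊 be two finite sets. There exists an element c ∈ 𝕋± such that c ⊖ a ⊵ 𝟘 and b ⊖ c ⊵ 𝟘 for all a ∈ A and b ∈ B if and only if b ⊖ a ⊵ 𝟘 for all pairs (a,b) ∈ A × B. -/
import Mathlib


/-!  Signed tropical numbers 𝕋±, the symmetrized tropical semiring 𝕊,
     and signed tropical convexity (Loho–Végh). -/

inductive SSign : Type where
  | pos : SSign
  | neg : SSign
  | bal : SSign
deriving DecidableEq

/-- The symmetrized tropical semiring 𝕊: the tropical zero 𝟘 = -∞ together with
elements `elem s r` where `s` is a sign (⊕, ⊖ or •) and `r` a real number. -/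
inductive STrop : Type where
  | zero : STrop
  | elem : SSign → ℝ → STrop

namespace STrop

/-- membership in the signed tropical numbers 𝕋± (i.e. not balanced-nonzero). -/
def isSigned : STrop → Prop
  | elem SSign.bal _ => False
  | _ => True

/-- membership in 𝕋≥, the nonnegative tropical numbers. -/
def nneg : STrop → Prop
  | zero => True
  | elem SSign.pos _ => True
  | _ => False

/-- membership in 𝕋≤, the nonpositive tropical numbers. -/
def npos : STrop → Prop
  | zero => True
  | elem SSign.neg _ => True
  | _ => False

/-- strictly positive signed element (sign ⊕, not 𝟘). -/
def isPos : STrop → Prop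
  | elem SSign.pos _ => True
  | _ => False

/-- balanced or 𝟘 (membership in 𝕋•). -/
def balZero : STrop → Prop
  | zero => True
  | elem SSign.bal _ => True
  | _ => False

/-- the negation map ⊖. -/
def neg : STrop → STrop
  | zero => zero
  | elem SSign.pos r => elem SSign.neg r
  | elem SSign.neg r => elem SSign.pos r
  | elem SSign.bal r => elem SSign.bal r

/-- tropical addition ⊕ on 𝕊. -/
noncomputable def add : STrop → STrop → STrop
  | zero, y => y
  | x, zero => x
  | elem s r, elem t u =>
    if r < u then elem t u
    else if u < r then elem s r
    else if s = t then elem s r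
    else elem SSign.bal r

def signMul : SSign → SSign → SSign
  | SSign.pos, t => t
  | SSign.neg, SSign.pos => SSign.neg
  | SSign.neg, SSign.neg => SSign.pos
  | SSign.neg, SSign.bal => SSign.bal
  | SSign.bal, _ => SSign.bal

/-- tropical multiplication ⊙ on 𝕊. -/
def mul : STrop → STrop → STrop
  | zero, _ => zero
  | _, zero => zero
  | elem s r, elem t u => elem (signMul s t) (r + u)

/-- a ⊖ b := a ⊕ (⊖b). -/
noncomputable def sub (x y : STrop) : STrop := add x (neg y)

/-- the tropical one, the signed element ⊕0. -/
def one : STrop := elem SSign.pos 0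

/-- the absolute value |·| : 𝕊 → 𝕋≥. -/
def absS : STrop → STrop
  | zero => zero
  | elem _ r => elem SSign.pos r

/-- strict order: x > y iff x ⊖ y is a strictly positive signed element. -/
def sgt (x y : STrop) : Prop := isPos (sub x y)

/-- balance relation: x ⋈ y iff x ⊖ y is balanced or 𝟘. -/
def bal (x y : STrop) : Prop := balZero (sub x y)

/-- the relation ⊵ : x ⊵ y iff x > y or x ⋈ y. -/
def teq (x y : STrop) : Prop := sgt x y ∨ bal x y

/-- the total order ≤ on the signed tropical numbers 𝕋±
(arbitrarily `False` whenever a balanced element is involved). -/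
def sle : STrop → STrop → Prop
  | zero, zero => True
  | zero, elem SSign.pos _ => True
  | elem SSign.neg _, zero => True
  | elem SSign.neg _, elem SSign.pos _ => True
  | elem SSign.pos r, elem SSign.pos u => r ≤ u
  | elem SSign.neg r, elem SSign.neg u => u ≤ r
  | _, _ => False

/-- U(a): the set of signed numbers incomparable with a; the singleton {a}
for signed a, and the order interval [⊖|a|, |a|] for balanced a. -/
def U : STrop → Set STrop
  | elem SSign.bal r => {x | isSigned x ∧ sle (elem SSign.neg r) x ∧ sle x (elem SSign.pos r)}
  | a => {a}

/-- tropical sum of finitely many elements of 𝕊. -/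
noncomputable def sumFin : ∀ {n : ℕ}, (Fin n → STrop) → STrop
  | 0, _ => zero
  | _ + 1, f => add (f 0) (sumFin fun i => f i.succ)

/-- matrix–vector product A ⊙ x over 𝕊. -/
noncomputable def mv {d n : ℕ} (A : Fin d → Fin n → STrop) (x : Fin n → STrop) : Fin d → STrop :=
  fun i => sumFin fun j => mul (A i j) (x j)

/-- vectors in 𝕋±^d. -/
def isSignedVec {d : ℕ} (v : Fin d → STrop) : Prop := ∀ i, isSigned (v i)

/-- the signed tropical convex hull of the columns of a matrix A:
tconv(A) = {z ∈ 𝕋±^d : z ⋈ A⊙x for some x ∈ 𝕋≥^n with ⊕_j x_j = 0}. -/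
def tconv {d n : ℕ} (A : Fin d → Fin n → STrop) : Set (Fin d → STrop) :=
  {z | isSignedVec z ∧ ∃ x : Fin n → STrop,
    (∀ j, nneg (x j)) ∧ sumFin x = one ∧ ∀ i, bal (z i) (mv A x i)}

/-- the signed tropical convex hull of an arbitrary set: the union of the hulls
of all finite collections of points of M. -/
def tconvSet {d : ℕ} (M : Set (Fin d → STrop)) : Set (Fin d → STrop) :=
  ⋃ (n : ℕ) (A : Fin d → Fin n → STrop) (_ : ∀ j, (fun i => A i j) ∈ M), tconv A

/-- a set M ⊆ 𝕋±^d is tropically convex iff M = tconv(M). -/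
def TropConvex {d : ℕ} (M : Set (Fin d → STrop)) : Prop := M = tconvSet M

/-- evaluation a ⊙ (0, x₁, …, x_d)ᵀ of an affine functional. -/
noncomputable def affEval {d : ℕ} (a : Fin (d + 1) → STrop) (x : Fin d → STrop) : STrop :=
  sumFin fun j => mul (a j) ((Fin.cons one x : Fin (d + 1) → STrop) j)

/-- the open signed tropical halfspace H⁺(a) = {x ∈ 𝕋±^d : a⊙(0,x)ᵀ > 𝟘}. -/
def Hopen {d : ℕ} (a : Fin (d + 1) → STrop) : Set (Fin d → STrop) :=
  {x | isSignedVec x ∧ sgt (affEval a x) zero}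

/-- the closed signed tropical halfspace H̄⁺(a) = {x ∈ 𝕋±^d : a⊙(0,x)ᵀ ⊵ 𝟘}. -/
def Hclosed {d : ℕ} (a : Fin (d + 1) → STrop) : Set (Fin d → STrop) :=
  {x | isSignedVec x ∧ teq (affEval a x) zero}

/-- the non-negative kernel nnker(A). -/
def nnker {d n : ℕ} (A : Fin d → Fin n → STrop) : Set (Fin n → STrop) :=
  {x | (∀ j, nneg (x j)) ∧ x ≠ (fun _ => zero) ∧ ∀ i, balZero (mv A x i)}

/-- the open tropical cone sep(A) = {y ∈ 𝕋±^d : yᵀ⊙A > 𝟘 componentwise}. -/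
def sep {d : ℕ} {J : Type} (A : Fin d → J → STrop) : Set (Fin d → STrop) :=
  {y | isSignedVec y ∧ ∀ j, isPos (sumFin fun i => mul (y i) (A i j))}

end STrop

namespace ElimAux
open STrop

def Lelem : STrop → STrop
  | STrop.zero => STrop.zero
  | STrop.elem SSign.pos r => STrop.elem SSign.pos r
  | STrop.elem SSign.neg r => STrop.elem SSign.neg r
  | STrop.elem SSign.bal r => STrop.elem SSign.neg r

def Uelem : STrop → STrop
  | STrop.zero => STrop.zero
  | STrop.elem SSign.pos r => STrop.elem SSign.pos r
  | STrop.elem SSign.neg r => STrop.elem SSign.neg r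
  | STrop.elem SSign.bal r => STrop.elem SSign.pos r

lemma add_zero' (x : STrop) : STrop.add x STrop.zero = x := by cases x <;> rfl

lemma teq_zero_iff (x : STrop) :
    STrop.teq x STrop.zero ↔ STrop.isPos x ∨ STrop.balZero x := by
  simp [STrop.teq, STrop.sgt, STrop.bal, STrop.sub, STrop.neg, add_zero']

lemma Lelem_signed (a : STrop) : STrop.isSigned (Lelem a) := by
  rcases a with _ | ⟨s, r⟩ <;> [trivial; cases s <;> trivial]

lemma Uelem_signed (a : STrop) : STrop.isSigned (Uelem a) := by
  rcases a with _ | ⟨s, r⟩ <;> [trivial; cases s <;> trivial]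

lemma Lelem_of_signed (a : STrop) (h : STrop.isSigned a) : Lelem a = a := by
  rcases a with _ | ⟨s, r⟩; · rfl
  cases s <;> first | rfl | exact absurd h (by simp [STrop.isSigned])

lemma Uelem_of_signed (a : STrop) (h : STrop.isSigned a) : Uelem a = a := by
  rcases a with _ | ⟨s, r⟩; · rfl
  cases s <;> first | rfl | exact absurd h (by simp [STrop.isSigned])

lemma key (a b : STrop) :
    STrop.teq (STrop.sub b a) STrop.zero ↔ STrop.sle (Lelem a) (Uelem b) := by
  rw [teq_zero_iff]
  rcases a with _ | ⟨sa, r⟩ <;> rcases b with _ | ⟨sb, u⟩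
  · simp [STrop.sub, STrop.neg, STrop.add, Lelem, Uelem, STrop.sle, STrop.balZero]
  · cases sb <;>
      simp [STrop.sub, STrop.neg, STrop.add, Lelem, Uelem, STrop.sle,
        STrop.isPos, STrop.balZero]
  · cases sa <;>
      simp [STrop.sub, STrop.neg, STrop.add, Lelem, Uelem, STrop.sle,
        STrop.isPos, STrop.balZero]
  · cases sa <;> cases sb <;>
      simp only [STrop.sub, STrop.neg, STrop.add, Lelem, Uelem, STrop.sle,
        STrop.isPos, STrop.balZero] <;>
      split_ifs <;> simp_all <;> linarith

end ElimAux

namespace ElimAux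

noncomputable def enc : STrop → ℤ ×ₗ ℝ
  | STrop.zero => toLex (0, 1)
  | STrop.elem SSign.pos r => toLex (1, r)
  | STrop.elem SSign.neg r => toLex (-1, -r)
  | STrop.elem SSign.bal r => toLex (1, r)

lemma sle_iff_enc (x y : STrop) (hx : STrop.isSigned x) (hy : STrop.isSigned y) :
    STrop.sle x y ↔ enc x ≤ enc y := by
  rcases x with _ | ⟨sx, r⟩ <;> rcases y with _ | ⟨sy, u⟩
  · simp [enc, STrop.sle, Prod.Lex.le_iff]
  · cases sy <;>
      first
      | exact hy.elim
      | (simp [enc, STrop.sle, Prod.Lex.le_iff, Prod.Lex.lt_iff]; try norm_num)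
  · cases sx <;>
      first
      | exact hx.elim
      | (simp [enc, STrop.sle, Prod.Lex.le_iff, Prod.Lex.lt_iff]; try norm_num)
  · cases sx <;> cases sy <;>
      first
      | exact hx.elim
      | exact hy.elim
      | (simp [enc, STrop.sle, Prod.Lex.le_iff, Prod.Lex.lt_iff]; try norm_num)

end ElimAux


/-- elimination for non-strict inequalities: a signed c with
c ⊖ a ⊵ 𝟘 and b ⊖ c ⊵ 𝟘 for all a ∈ A, b ∈ B exists iff b ⊖ a ⊵ 𝟘 for all pairs. -/
theorem elimination_non_strict (A B : Finset STrop) :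
    (∃ c : STrop, STrop.isSigned c ∧
        (∀ a ∈ A, STrop.teq (STrop.sub c a) STrop.zero) ∧
        (∀ b ∈ B, STrop.teq (STrop.sub b c) STrop.zero)) ↔
      (∀ a ∈ A, ∀ b ∈ B, STrop.teq (STrop.sub b a) STrop.zero) := by
  open ElimAux in
  constructor
  · rintro ⟨c, hc, hA, hB⟩ a ha b hb
    rw [key]
    have h1 := (key a c).mp (hA a ha)
    have h2 := (key c b).mp (hB b hb)
    rw [Uelem_of_signed c hc] at h1
    rw [Lelem_of_signed c hc] at h2
    rw [sle_iff_enc _ _ (Lelem_signed a) (Uelem_signed b)]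
    rw [sle_iff_enc _ _ (Lelem_signed a) hc] at h1
    rw [sle_iff_enc _ _ hc (Uelem_signed b)] at h2
    exact le_trans h1 h2
  · intro h
    rcases B.eq_empty_or_nonempty with rfl | hB
    · rcases A.eq_empty_or_nonempty with rfl | hA
      · exact ⟨STrop.zero, trivial, by simp, by simp⟩
      · obtain ⟨a0, ha0, hmax⟩ := A.exists_max_image (fun a => enc (Lelem a)) hA
        refine ⟨Lelem a0, Lelem_signed a0, fun a ha => ?_, by simp⟩
        rw [key, Uelem_of_signed _ (Lelem_signed a0),
          sle_iff_enc _ _ (Lelem_signed a) (Lelem_signed a0)]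
        exact hmax a ha
    · obtain ⟨b0, hb0, hmin⟩ := B.exists_min_image (fun b => enc (Uelem b)) hB
      refine ⟨Uelem b0, Uelem_signed b0, fun a ha => ?_, fun b hb => ?_⟩
      · rw [key, Uelem_of_signed _ (Uelem_signed b0)]
        exact (key a b0).mp (h a ha b0 hb0)
      · rw [key, Lelem_of_signed _ (Uelem_signed b0),
          sle_iff_enc _ _ (Uelem_signed b0) (Uelem_signed b)]
        exact hmin b hb
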